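/- For all continuous functions u, u* : [α₀, ξ] → ℝ and every η ∈ [α₀, ξ], one has |Φ(η,u) − Φ(η,u*)| ≤ Φ̃(α₀, η)·‖u − u*‖, where ‖·‖ denotes the supremum norm on [α₀, ξ] and Φ̃(α₀, η) = (α₀^ν/L_m²)·[(1/a)·(Ñ + N_M·L̃/L_m)·(η^{3−ν}/(3−ν) − α₀²·η^{1−ν}/(1−ν) + 2α₀^{3−ν}/((3−ν)(1−ν))) + L̃·(η^{1−ν} − α₀^{1−ν})/(1−ν)]. -/

import Mathlib

open Real MeasureTheory Set

/-- `E(η,u) = exp(−(2/a)·∫_{α₀}^{η} s·N*(u(s))/L*(u(s)) ds)` -/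
noncomputable def Efun (a : ℝ) (L N : ℝ → ℝ) (α₀ : ℝ) (u : ℝ → ℝ) (η : ℝ) : ℝ :=
  Real.exp (-(2 / a) * ∫ s in α₀..η, s * N (u s) / L (u s))

/-- `Φ(η,u) = α₀^ν·∫_{α₀}^{η} E(v,u)/(v^ν·L*(u(v))) dv` -/
noncomputable def Phi (a ν : ℝ) (L N : ℝ → ℝ) (α₀ : ℝ) (u : ℝ → ℝ) (η : ℝ) : ℝ :=
  α₀ ^ ν * ∫ v in α₀..η, Efun a L N α₀ u v / (v ^ ν * L (u v))

/-- Supremum norm on the interval `[α₀, ξ]`. -/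
noncomputable def supNorm (α₀ ξ : ℝ) (f : ℝ → ℝ) : ℝ :=
  ⨆ η : Icc α₀ ξ, |f η|

/-- The Lipschitz bound `Φ̃(α₀, η)` from Lemma 4. -/
noncomputable def PhiTilde (a ν Lm NM Ltil Ntil α₀ η : ℝ) : ℝ :=
  (α₀ ^ ν / Lm ^ 2) *
    ((1 / a) * (Ntil + NM * Ltil / Lm) *
        (η ^ (3 - ν) / (3 - ν) - α₀ ^ 2 * η ^ (1 - ν) / (1 - ν) +
          2 * α₀ ^ (3 - ν) / ((3 - ν) * (1 - ν))) +
      Ltil * (η ^ (1 - ν) - α₀ ^ (1 - ν)) / (1 - ν))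

lemma exp_neg_lip {x y : ℝ} (hx : 0 ≤ x) (hy : 0 ≤ y) :
    |Real.exp (-x) - Real.exp (-y)| ≤ |x - y| := by
  have key : ∀ p q : ℝ, 0 ≤ p → p ≤ q → Real.exp (-p) - Real.exp (-q) ≤ q - p := by
    intro p q hp hpq
    have h1 : 1 + (p - q) ≤ Real.exp (p - q) := by
      have := Real.add_one_le_exp (p - q); linarith
    have h2 : Real.exp (-p) ≤ 1 := Real.exp_le_one_iff.mpr (by linarith)
    have h3 : 0 < Real.exp (-p) := Real.exp_pos _
    have h4 : Real.exp (-q) = Real.exp (-p) * Real.exp (p - q) := by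
      rw [← Real.exp_add]; ring_nf
    have h5 : Real.exp (p - q) ≤ 1 := Real.exp_le_one_iff.mpr (by linarith)
    nlinarith
  rcases le_total x y with h | h
  · rw [abs_of_nonneg (by linarith [Real.exp_le_exp.mpr (neg_le_neg h)] : 0 ≤ Real.exp (-x) - Real.exp (-y)),
      abs_of_nonpos (by linarith : x - y ≤ 0)]
    have := key x y hx h; linarith
  · rw [abs_of_nonpos (by linarith [Real.exp_le_exp.mpr (neg_le_neg h)] : Real.exp (-x) - Real.exp (-y) ≤ 0),
      abs_of_nonneg (by linarith : 0 ≤ x - y)]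
    have := key y x hy h; linarith

lemma ratio_bound {Lx Ly Nx Ny Lm NM dL dN : ℝ} (hLm : 0 < Lm)
    (hLx : Lm ≤ Lx) (hLy : Lm ≤ Ly) (hNy0 : 0 ≤ Ny) (hNy : Ny ≤ NM)
    (hdN : |Nx - Ny| ≤ dN) (hdL : |Lx - Ly| ≤ dL) :
    |Nx / Lx - Ny / Ly| ≤ dN / Lm + NM * dL / Lm ^ 2 := by
  have h0x : (0:ℝ) < Lx := hLm.trans_le hLx
  have h0y : (0:ℝ) < Ly := hLm.trans_le hLy
  have e : Nx / Lx - Ny / Ly = (Nx - Ny) / Lx + Ny * (Ly - Lx) / (Lx * Ly) := by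
    field_simp; ring
  have hdN0 : 0 ≤ dN := le_trans (abs_nonneg _) hdN
  have hdL0 : 0 ≤ dL := le_trans (abs_nonneg _) hdL
  calc |Nx / Lx - Ny / Ly| ≤ |(Nx - Ny) / Lx| + |Ny * (Ly - Lx) / (Lx * Ly)| := by
        rw [e]; exact abs_add_le _ _
    _ ≤ dN / Lm + NM * dL / Lm ^ 2 := by
        apply add_le_add
        · rw [abs_div, abs_of_pos h0x]
          exact div_le_div₀ hdN0 hdN hLm hLx
        · rw [abs_div, abs_mul, abs_of_pos (mul_pos h0x h0y), abs_of_nonneg hNy0]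
          apply div_le_div₀ (mul_nonneg (le_trans hNy0 hNy) hdL0) _ (by positivity)
            (by nlinarith : Lm ^ 2 ≤ Lx * Ly)
          have : |Ly - Lx| ≤ dL := by rw [abs_sub_comm]; exact hdL
          exact mul_le_mul hNy this (abs_nonneg _) (le_trans hNy0 hNy)

lemma inv_bound {Lx Ly Lm dL : ℝ} (hLm : 0 < Lm)
    (hLx : Lm ≤ Lx) (hLy : Lm ≤ Ly) (hdL : |Lx - Ly| ≤ dL) :
    |1 / Lx - 1 / Ly| ≤ dL / Lm ^ 2 := by
  have h0x : (0:ℝ) < Lx := hLm.trans_le hLx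
  have h0y : (0:ℝ) < Ly := hLm.trans_le hLy
  have e : 1 / Lx - 1 / Ly = (Ly - Lx) / (Lx * Ly) := by field_simp
  rw [e, abs_div, abs_of_pos (mul_pos h0x h0y)]
  apply div_le_div₀ (le_trans (abs_nonneg _) (by rwa [abs_sub_comm] at hdL))
    (by rwa [abs_sub_comm] at hdL) (by positivity) (by nlinarith)

lemma innerInt_contOn {α₀ ξ : ℝ} {L N w : ℝ → ℝ}
    (hαξ : α₀ ≤ ξ) (hLcont : Continuous L) (hNcont : Continuous N)
    (hLpos : ∀ x, 0 < L x) (hw : ContinuousOn w (Icc α₀ ξ)) :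
    ContinuousOn (fun v => ∫ s in α₀..v, s * N (w s) / L (w s)) (Icc α₀ ξ) := by
  have hg : ContinuousOn (fun s => s * N (w s) / L (w s)) (Icc α₀ ξ) :=
    (continuousOn_id.mul (hNcont.comp_continuousOn hw)).div
      (hLcont.comp_continuousOn hw) (fun s _ => (hLpos _).ne')
  have h := intervalIntegral.continuousOn_primitive_interval
    (μ := volume) (a := α₀) (b := ξ) (f := fun s => s * N (w s) / L (w s)) ?_
  · rwa [uIcc_of_le hαξ] at h
  · rw [uIcc_of_le hαξ]; exact hg.integrableOn_Icc

lemma Fcont {a ν α₀ ξ : ℝ} {L N w : ℝ → ℝ} (hα₀ : 0 < α₀) (hαξ : α₀ ≤ ξ)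
    (hLcont : Continuous L) (hNcont : Continuous N)
    (hLpos : ∀ x, 0 < L x) (hw : ContinuousOn w (Icc α₀ ξ)) :
    ContinuousOn (fun v => Efun a L N α₀ w v / (v ^ ν * L (w v))) (Icc α₀ ξ) := by
  have hI := innerInt_contOn hαξ hLcont hNcont hLpos hw
  have hE : ContinuousOn (fun v => Efun a L N α₀ w v) (Icc α₀ ξ) := by
    simp only [Efun]
    exact Real.continuous_exp.comp_continuousOn (continuousOn_const.mul hI)
  apply hE.div
  · apply ContinuousOn.mul
    · exact ContinuousOn.rpow_const continuousOn_id
        (fun v hv => Or.inl (ne_of_gt (lt_of_lt_of_le hα₀ hv.1)))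
    · exact hLcont.comp_continuousOn hw
  · intro v hv
    have h1 : 0 < v ^ ν := Real.rpow_pos_of_pos (lt_of_lt_of_le hα₀ hv.1) ν
    exact (mul_pos h1 (hLpos _)).ne'



set_option maxHeartbeats 1000000 in
theorem stmt_3 (a ν α₀ ξ : ℝ) (L N : ℝ → ℝ) (Lm LM Nm NM Ltil Ntil : ℝ)
    (ha : 0 < a) (hν0 : 0 < ν) (hν1 : ν < 1) (hα₀ : 0 < α₀) (hαξ : α₀ < ξ)
    (hLcont : Continuous L) (hNcont : Continuous N)
    (hLm : 0 < Lm) (hNm : 0 < Nm) (hLtil : 0 < Ltil) (hNtil : 0 < Ntil)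
    (hL : ∀ x : ℝ, Lm ≤ L x ∧ L x ≤ LM)
    (hN : ∀ x : ℝ, Nm ≤ N x ∧ N x ≤ NM)
    (hLlip : ∀ x y : ℝ, |L x - L y| ≤ Ltil * |x - y|)
    (hNlip : ∀ x y : ℝ, |N x - N y| ≤ Ntil * |x - y|) :
    ∀ u ustar : ℝ → ℝ, ContinuousOn u (Icc α₀ ξ) → ContinuousOn ustar (Icc α₀ ξ) →
      ∀ η ∈ Icc α₀ ξ,
        |Phi a ν L N α₀ u η - Phi a ν L N α₀ ustar η| ≤
          PhiTilde a ν Lm NM Ltil Ntil α₀ η * supNorm α₀ ξ (fun x => u x - ustar x) := by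
  intro u ustar hu hus η hη
  obtain ⟨hηl, hηr⟩ := hη
  have hξ : α₀ ≤ ξ := hαξ.le
  have hLpos : ∀ x, 0 < L x := fun x => lt_of_lt_of_le hLm (hL x).1
  have hNpos : ∀ x, 0 < N x := fun x => lt_of_lt_of_le hNm (hN x).1
  set M := supNorm α₀ ξ (fun x => u x - ustar x) with hMdef
  have hbdd : BddAbove (range fun x : Icc α₀ ξ => |u x - ustar x|) := by
    have hc : ContinuousOn (fun x => |u x - ustar x|) (Icc α₀ ξ) := (hu.sub hus).abs
    have h2 := (isCompact_Icc (a := α₀) (b := ξ)).bddAbove_image hc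
    rwa [image_eq_range] at h2
  have hMb : ∀ x ∈ Icc α₀ ξ, |u x - ustar x| ≤ M := fun x hx =>
    le_ciSup hbdd (⟨x, hx⟩ : Icc α₀ ξ)
  have hM0 : 0 ≤ M := le_trans (abs_nonneg _) (hMb α₀ ⟨le_refl _, hξ⟩)
  -- nonnegativity of inner integrals
  have hInn : ∀ (w : ℝ → ℝ), ∀ v ∈ Icc α₀ ξ, 0 ≤ ∫ s in α₀..v, s * N (w s) / L (w s) := by
    intro w v hv
    apply intervalIntegral.integral_nonneg hv.1
    intro s hs
    exact div_nonneg (mul_nonneg (lt_of_lt_of_le hα₀ hs.1).le (hNpos _).le) (hLpos _).le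
  have hNM : 0 < NM := lt_of_lt_of_le hNm (le_trans (hN 0).1 (hN 0).2)
  set C1 := Ntil / Lm + NM * Ltil / Lm ^ 2 with hC1def
  have hC1pos : 0 < C1 := by rw [hC1def]; positivity
  -- integrability of inner integrands on subintervals
  have hgint : ∀ (w : ℝ → ℝ), ContinuousOn w (Icc α₀ ξ) → ∀ v ∈ Icc α₀ ξ,
      IntervalIntegrable (fun s => s * N (w s) / L (w s)) volume α₀ v := by
    intro w hw v hv
    apply ContinuousOn.intervalIntegrable
    rw [uIcc_of_le hv.1]
    exact ((continuousOn_id.mul (hNcont.comp_continuousOn (hw.mono (Icc_subset_Icc le_rfl hv.2)))).div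
      (hLcont.comp_continuousOn (hw.mono (Icc_subset_Icc le_rfl hv.2))) (fun s _ => (hLpos _).ne'))
  -- difference of inner integrals
  have hIdiff : ∀ v ∈ Icc α₀ ξ,
      |(∫ s in α₀..v, s * N (u s) / L (u s)) - ∫ s in α₀..v, s * N (ustar s) / L (ustar s)|
        ≤ C1 * M * ((v ^ 2 - α₀ ^ 2) / 2) := by
    intro v hv
    rw [← intervalIntegral.integral_sub (hgint u hu v hv) (hgint ustar hus v hv)]
    calc |∫ s in α₀..v, (s * N (u s) / L (u s) - s * N (ustar s) / L (ustar s))|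
        ≤ ∫ s in α₀..v, |s * N (u s) / L (u s) - s * N (ustar s) / L (ustar s)| :=
          intervalIntegral.abs_integral_le_integral_abs hv.1
      _ ≤ ∫ s in α₀..v, s * (C1 * M) := by
          apply intervalIntegral.integral_mono_on hv.1
            ((hgint u hu v hv).sub (hgint ustar hus v hv)).abs
            (by apply ContinuousOn.intervalIntegrable; fun_prop)
          intro s hs
          have hs0 : 0 < s := lt_of_lt_of_le hα₀ hs.1
          have hsx : s ∈ Icc α₀ ξ := ⟨hs.1, le_trans hs.2 hv.2⟩
          have hrat : |N (u s) / L (u s) - N (ustar s) / L (ustar s)|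
              ≤ C1 * |u s - ustar s| := by
            have h := ratio_bound hLm (hL (u s)).1 (hL (ustar s)).1 (hNpos _).le
              (hN (ustar s)).2 (hNlip (u s) (ustar s)) (hLlip (u s) (ustar s))
            calc |N (u s) / L (u s) - N (ustar s) / L (ustar s)|
                ≤ Ntil * |u s - ustar s| / Lm + NM * (Ltil * |u s - ustar s|) / Lm ^ 2 := h
              _ = C1 * |u s - ustar s| := by rw [hC1def]; ring
          calc |s * N (u s) / L (u s) - s * N (ustar s) / L (ustar s)|
              = s * |N (u s) / L (u s) - N (ustar s) / L (ustar s)| := by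
                rw [mul_div_assoc, mul_div_assoc, ← mul_sub, abs_mul, abs_of_pos hs0]
            _ ≤ s * (C1 * |u s - ustar s|) := by
                exact mul_le_mul_of_nonneg_left hrat hs0.le
            _ ≤ s * (C1 * M) := by
                apply mul_le_mul_of_nonneg_left _ hs0.le
                exact mul_le_mul_of_nonneg_left (hMb s hsx) hC1pos.le
      _ = C1 * M * ((v ^ 2 - α₀ ^ 2) / 2) := by
          rw [intervalIntegral.integral_mul_const, integral_id]; ring

  -- Efun bounds
  have hEpos : ∀ (w : ℝ → ℝ) (v : ℝ), 0 < Efun a L N α₀ w v := fun w v => Real.exp_pos _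
  have hEle1 : ∀ (w : ℝ → ℝ), ∀ v ∈ Icc α₀ ξ, Efun a L N α₀ w v ≤ 1 := by
    intro w v hv
    rw [Efun]
    apply Real.exp_le_one_iff.mpr
    rw [neg_mul]
    exact neg_nonpos_of_nonneg (mul_nonneg (by positivity) (hInn w v hv))
  have hEdiff : ∀ v ∈ Icc α₀ ξ,
      |Efun a L N α₀ u v - Efun a L N α₀ ustar v| ≤ 1 / a * C1 * M * (v ^ 2 - α₀ ^ 2) := by
    intro v hv
    have hx : 0 ≤ 2 / a * ∫ s in α₀..v, s * N (u s) / L (u s) :=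
      mul_nonneg (by positivity) (hInn u v hv)
    have hy : 0 ≤ 2 / a * ∫ s in α₀..v, s * N (ustar s) / L (ustar s) :=
      mul_nonneg (by positivity) (hInn ustar v hv)
    have e1 : Efun a L N α₀ u v
        = Real.exp (-(2 / a * ∫ s in α₀..v, s * N (u s) / L (u s))) := by rw [Efun, neg_mul]
    have e2 : Efun a L N α₀ ustar v
        = Real.exp (-(2 / a * ∫ s in α₀..v, s * N (ustar s) / L (ustar s))) := by
      rw [Efun, neg_mul]
    rw [e1, e2]
    calc |Real.exp (-(2 / a * ∫ s in α₀..v, s * N (u s) / L (u s)))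
          - Real.exp (-(2 / a * ∫ s in α₀..v, s * N (ustar s) / L (ustar s)))|
        ≤ |(2 / a * ∫ s in α₀..v, s * N (u s) / L (u s))
            - 2 / a * ∫ s in α₀..v, s * N (ustar s) / L (ustar s)| := exp_neg_lip hx hy
      _ = 2 / a * |(∫ s in α₀..v, s * N (u s) / L (u s))
            - ∫ s in α₀..v, s * N (ustar s) / L (ustar s)| := by
          rw [← mul_sub, abs_mul, abs_of_nonneg (by positivity : (0:ℝ) ≤ 2 / a)]
      _ ≤ 2 / a * (C1 * M * ((v ^ 2 - α₀ ^ 2) / 2)) :=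
          mul_le_mul_of_nonneg_left (hIdiff v hv) (by positivity)
      _ = 1 / a * C1 * M * (v ^ 2 - α₀ ^ 2) := by ring
  set A := 1 / a * C1 * M / Lm with hA
  set B := Ltil * M / Lm ^ 2 with hB
  have hA0 : 0 ≤ A := by rw [hA]; positivity
  have hB0 : 0 ≤ B := by rw [hB]; positivity
  have hFdiff : ∀ v ∈ Icc α₀ ξ,
      |Efun a L N α₀ u v / (v ^ ν * L (u v)) - Efun a L N α₀ ustar v / (v ^ ν * L (ustar v))|
        ≤ (A * (v ^ 2 - α₀ ^ 2) + B) * v ^ (-ν) := by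
    intro v hv
    have hv0 : 0 < v := lt_of_lt_of_le hα₀ hv.1
    have hvν : 0 < v ^ ν := Real.rpow_pos_of_pos hv0 ν
    have hLu := hLpos (u v)
    have hLs := hLpos (ustar v)
    have hvneg : v ^ (-ν) = 1 / v ^ ν := by
      rw [Real.rpow_neg hv0.le, one_div]
    have hv2 : 0 ≤ v ^ 2 - α₀ ^ 2 := by nlinarith [hv.1]
    have hid : Efun a L N α₀ u v / (v ^ ν * L (u v))
          - Efun a L N α₀ ustar v / (v ^ ν * L (ustar v))
        = (Efun a L N α₀ u v - Efun a L N α₀ ustar v) / (v ^ ν * L (u v))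
          + Efun a L N α₀ ustar v * (1 / L (u v) - 1 / L (ustar v)) / v ^ ν := by
      field_simp
      ring
    have t1 : |(Efun a L N α₀ u v - Efun a L N α₀ ustar v) / (v ^ ν * L (u v))|
        ≤ A * (v ^ 2 - α₀ ^ 2) * v ^ (-ν) := by
      rw [abs_div, abs_of_pos (mul_pos hvν hLu)]
      calc |Efun a L N α₀ u v - Efun a L N α₀ ustar v| / (v ^ ν * L (u v))
          ≤ (1 / a * C1 * M * (v ^ 2 - α₀ ^ 2)) / (v ^ ν * Lm) :=
            div_le_div₀ (by positivity) (hEdiff v hv) (by positivity)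
              (mul_le_mul_of_nonneg_left (hL (u v)).1 hvν.le)
        _ = A * (v ^ 2 - α₀ ^ 2) * v ^ (-ν) := by
            rw [hvneg, hA]
            field_simp [hvν.ne', hLm.ne', ha.ne']
    have t2 : |Efun a L N α₀ ustar v * (1 / L (u v) - 1 / L (ustar v)) / v ^ ν|
        ≤ B * v ^ (-ν) := by
      rw [abs_div, abs_of_pos hvν, abs_mul, abs_of_pos (hEpos ustar v)]
      have hinv : |1 / L (u v) - 1 / L (ustar v)| ≤ Ltil * M / Lm ^ 2 := by
        calc |1 / L (u v) - 1 / L (ustar v)| ≤ Ltil * |u v - ustar v| / Lm ^ 2 :=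
              inv_bound hLm (hL (u v)).1 (hL (ustar v)).1 (hLlip (u v) (ustar v))
          _ ≤ Ltil * M / Lm ^ 2 := by
              apply div_le_div₀ (by positivity) _ (by positivity) le_rfl
              exact mul_le_mul_of_nonneg_left (hMb v hv) hLtil.le
      calc Efun a L N α₀ ustar v * |1 / L (u v) - 1 / L (ustar v)| / v ^ ν
          ≤ 1 * B / v ^ ν := by
            apply div_le_div₀ (by rw [hB]; positivity) _ hvν le_rfl
            rw [hB]
            exact mul_le_mul (hEle1 ustar v hv) hinv (abs_nonneg _) zero_le_one
        _ = B * v ^ (-ν) := by rw [hvneg]; ring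
    calc |Efun a L N α₀ u v / (v ^ ν * L (u v))
          - Efun a L N α₀ ustar v / (v ^ ν * L (ustar v))|
        ≤ |(Efun a L N α₀ u v - Efun a L N α₀ ustar v) / (v ^ ν * L (u v))|
          + |Efun a L N α₀ ustar v * (1 / L (u v) - 1 / L (ustar v)) / v ^ ν| := by
          rw [hid]; exact abs_add_le _ _
      _ ≤ A * (v ^ 2 - α₀ ^ 2) * v ^ (-ν) + B * v ^ (-ν) := add_le_add t1 t2
      _ = (A * (v ^ 2 - α₀ ^ 2) + B) * v ^ (-ν) := by ring

  -- integrability facts on [α₀, η]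
  have hFu : IntervalIntegrable (fun v => Efun a L N α₀ u v / (v ^ ν * L (u v))) volume α₀ η := by
    apply ContinuousOn.intervalIntegrable
    rw [uIcc_of_le hηl]
    exact (Fcont hα₀ hξ hLcont hNcont hLpos hu).mono (Icc_subset_Icc le_rfl hηr)
  have hFs : IntervalIntegrable (fun v => Efun a L N α₀ ustar v / (v ^ ν * L (ustar v)))
      volume α₀ η := by
    apply ContinuousOn.intervalIntegrable
    rw [uIcc_of_le hηl]
    exact (Fcont hα₀ hξ hLcont hNcont hLpos hus).mono (Icc_subset_Icc le_rfl hηr)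
  have h0not : (0:ℝ) ∉ uIcc α₀ η := by
    rw [uIcc_of_le hηl]
    rintro ⟨h1, h2⟩
    linarith
  have hint1 : IntervalIntegrable (fun v => A * v ^ ((2:ℝ) - ν)) volume α₀ η :=
    (intervalIntegral.intervalIntegrable_rpow (Or.inr h0not)).const_mul A
  have hint2 : IntervalIntegrable (fun v => (B - A * α₀ ^ 2) * v ^ (-ν)) volume α₀ η :=
    (intervalIntegral.intervalIntegrable_rpow (Or.inr h0not)).const_mul (B - A * α₀ ^ 2)
  have hG : IntervalIntegrable (fun v => (A * (v ^ 2 - α₀ ^ 2) + B) * v ^ (-ν)) volume α₀ η := by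
    apply ContinuousOn.intervalIntegrable
    apply ContinuousOn.mul (by fun_prop)
    exact ContinuousOn.rpow_const continuousOn_id (fun v hv => Or.inl (fun h0 => h0not (h0 ▸ hv)))
  -- the difference of the Phis
  have hPhiDiff : Phi a ν L N α₀ u η - Phi a ν L N α₀ ustar η
      = α₀ ^ ν * ∫ v in α₀..η, (Efun a L N α₀ u v / (v ^ ν * L (u v))
          - Efun a L N α₀ ustar v / (v ^ ν * L (ustar v))) := by
    rw [Phi, Phi, ← mul_sub, intervalIntegral.integral_sub hFu hFs]
  have hαν : (0:ℝ) < α₀ ^ ν := Real.rpow_pos_of_pos hα₀ ν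
  -- value of the bounding integral
  have h3ν : (0:ℝ) < 3 - ν := by linarith
  have h1ν : (0:ℝ) < 1 - ν := by linarith
  have hGval : (∫ v in α₀..η, (A * (v ^ 2 - α₀ ^ 2) + B) * v ^ (-ν))
      = A * ((η ^ ((3:ℝ) - ν) - α₀ ^ ((3:ℝ) - ν)) / (3 - ν))
        + (B - A * α₀ ^ 2) * ((η ^ ((1:ℝ) - ν) - α₀ ^ ((1:ℝ) - ν)) / (1 - ν)) := by
    have hcongr : EqOn (fun v => (A * (v ^ 2 - α₀ ^ 2) + B) * v ^ (-ν))
        (fun v => A * v ^ ((2:ℝ) - ν) + (B - A * α₀ ^ 2) * v ^ (-ν)) (uIcc α₀ η) := by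
      intro v hv
      rw [uIcc_of_le hηl] at hv
      have hv0 : 0 < v := lt_of_lt_of_le hα₀ hv.1
      have h2ν : v ^ ((2:ℝ) - ν) = v ^ 2 * v ^ (-ν) := by
        rw [show (2:ℝ) - ν = ((2:ℕ):ℝ) + (-ν) by push_cast; ring, Real.rpow_add hv0,
          Real.rpow_natCast]
      simp only
      rw [h2ν]
      ring
    rw [intervalIntegral.integral_congr hcongr,
      intervalIntegral.integral_add hint1 hint2,
      intervalIntegral.integral_const_mul, intervalIntegral.integral_const_mul,
      integral_rpow (Or.inl (by linarith : (-1:ℝ) < 2 - ν)),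
      integral_rpow (Or.inl (by linarith : (-1:ℝ) < -ν)),
      show (2:ℝ) - ν + 1 = 3 - ν by ring, show -ν + 1 = 1 - ν by ring]
  -- assemble
  rw [hPhiDiff, abs_mul, abs_of_pos hαν]
  have hbound : |∫ v in α₀..η, (Efun a L N α₀ u v / (v ^ ν * L (u v))
        - Efun a L N α₀ ustar v / (v ^ ν * L (ustar v)))|
      ≤ ∫ v in α₀..η, (A * (v ^ 2 - α₀ ^ 2) + B) * v ^ (-ν) := by
    calc |∫ v in α₀..η, (Efun a L N α₀ u v / (v ^ ν * L (u v))
          - Efun a L N α₀ ustar v / (v ^ ν * L (ustar v)))|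
        ≤ ∫ v in α₀..η, |Efun a L N α₀ u v / (v ^ ν * L (u v))
            - Efun a L N α₀ ustar v / (v ^ ν * L (ustar v))| :=
          intervalIntegral.abs_integral_le_integral_abs hηl
      _ ≤ ∫ v in α₀..η, (A * (v ^ 2 - α₀ ^ 2) + B) * v ^ (-ν) := by
          apply intervalIntegral.integral_mono_on hηl ((hFu.sub hFs).abs) hG
          intro v hv
          exact hFdiff v ⟨hv.1, le_trans hv.2 hηr⟩
  calc α₀ ^ ν * |∫ v in α₀..η, (Efun a L N α₀ u v / (v ^ ν * L (u v))
        - Efun a L N α₀ ustar v / (v ^ ν * L (ustar v)))|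
      ≤ α₀ ^ ν * ∫ v in α₀..η, (A * (v ^ 2 - α₀ ^ 2) + B) * v ^ (-ν) :=
        mul_le_mul_of_nonneg_left hbound hαν.le
    _ = PhiTilde a ν Lm NM Ltil Ntil α₀ η * M := by
        rw [hGval, PhiTilde, hA, hB, hC1def]
        have hRS : α₀ ^ ((3:ℝ) - ν) = α₀ ^ 2 * α₀ ^ ((1:ℝ) - ν) := by
          rw [show (3:ℝ) - ν = ((2:ℕ):ℝ) + (1 - ν) by push_cast; ring, Real.rpow_add hα₀,
            Real.rpow_natCast]
        rw [hRS]
        field_simp [ha.ne', hLm.ne', h3ν.ne', h1ν.ne']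
        ring
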